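/- For every function ω : ℕ → ℝ with ω(n) → ∞ as n → ∞, the probability that there exists a path in G from u to v of length at most log_{d−1} n − ω(n) is O((d−1)^{−ω(n)}) as n → ∞; in particular this probability tends to 0, so a.a.s. d_G(u,v) ≥ log_{d−1} n − ω(n) (or u and v are not joined by any path). -/

import Mathlib

open Classical in
lemma circ_regular {V : Type*} [AddCommGroup V] [Fintype V]
    (S : Finset V) (h0 : (0 : V) ∉ S) (hsym : ∀ s ∈ S, -s ∈ S) :
    ∃ G : SimpleGraph V, G.IsRegularOfDegree S.card := by
  refine ⟨⟨fun x y => x - y ∈ S, ?_, ?_⟩, ?_⟩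
  · constructor; intro x y h
    have := hsym _ h
    rwa [neg_sub] at this
  · constructor; intro x h
    simp only [sub_self] at h
    exact h0 h
  · intro v
    rw [SimpleGraph.degree, SimpleGraph.neighborFinset, ← Set.ncard_eq_toFinset_card']
    have key : SimpleGraph.neighborSet ⟨fun x y => x - y ∈ S, by
        constructor; intro x y h; have := hsym _ h; rwa [neg_sub] at this, by
        constructor; intro x h; simp only [sub_self] at h; exact h0 h⟩ v
        = (fun s => v - s) '' (S : Set V) := by
      ext y
      simp only [SimpleGraph.mem_neighborSet, Set.mem_image, Finset.mem_coe]
      constructor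
      · intro h; exact ⟨v - y, h, by abel⟩
      · rintro ⟨s, hs, rfl⟩; simpa using hs
    rw [key, Set.ncard_image_of_injective _ (sub_right_injective), Set.ncard_coe_finset]

open Classical in
lemma exists_regular_graph (d n : ℕ) (hd : 1 ≤ d) (hn : d + 1 ≤ n) (he : Even (d * n)) :
    ∃ G : SimpleGraph (Fin n), G.IsRegularOfDegree d := by
  obtain ⟨k, rfl⟩ : ∃ k, n = k + 1 := ⟨n - 1, by omega⟩
  set N := k + 1 with hN
  haveI : NeZero N := ⟨by omega⟩
  set m := d / 2 with hm
  -- basic jump sets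
  set bp : Finset (ZMod N) := (Finset.Icc 1 m).image (fun i : ℕ => (i : ZMod N)) with hbp
  set bn : Finset (ZMod N) := (Finset.Icc 1 m).image (fun i : ℕ => -(i : ZMod N)) with hbn
  have hvalcast : ∀ i : ℕ, i < N → ((i : ZMod N)).val = i := fun i h => ZMod.val_cast_of_lt h
  have hmN : m < N := by omega
  have hinj : Set.InjOn (fun i : ℕ => (i : ZMod N)) (Finset.Icc 1 m) := by
    intro i hi j hj hij
    simp only [Finset.coe_Icc, Set.mem_Icc] at hi hj
    have := congrArg ZMod.val hij
    rwa [hvalcast i (by omega), hvalcast j (by omega)] at this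
  have hcardbp : bp.card = m := by
    rw [hbp, Finset.card_image_of_injOn hinj, Nat.card_Icc]; omega
  have hcardbn : bn.card = m := by
    rw [hbn, Finset.card_image_of_injOn (fun i hi j hj hij => hinj hi hj (by
      simpa using neg_injective hij)), Nat.card_Icc]; omega
  have hnotzero : ∀ i : ℕ, 1 ≤ i → i ≤ m → (i : ZMod N) ≠ 0 := by
    intro i h1 h2 h
    have := congrArg ZMod.val h
    rw [hvalcast i (by omega), ZMod.val_zero] at this
    omega
  have hdisj : Disjoint bp bn := by
    rw [Finset.disjoint_left]
    rintro x hx hx'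
    rw [hbp, Finset.mem_image] at hx
    rw [hbn, Finset.mem_image] at hx'
    obtain ⟨i, hi, rfl⟩ := hx
    obtain ⟨j, hj, hj'⟩ := hx'
    simp only [Finset.mem_Icc] at hi hj
    have : ((i + j : ℕ) : ZMod N) = 0 := by
      push_cast
      rw [← hj']
      ring
    rw [ZMod.natCast_eq_zero_iff] at this
    have := Nat.le_of_dvd (by omega) this
    omega
  have h0bp : (0 : ZMod N) ∉ bp := by
    rw [hbp, Finset.mem_image]
    rintro ⟨i, hi, hi'⟩
    simp only [Finset.mem_Icc] at hi
    exact hnotzero i hi.1 hi.2 hi'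
  have h0bn : (0 : ZMod N) ∉ bn := by
    rw [hbn, Finset.mem_image]
    rintro ⟨i, hi, hi'⟩
    simp only [Finset.mem_Icc] at hi
    exact hnotzero i hi.1 hi.2 (by rwa [← neg_eq_zero])
  have hsymb : ∀ s ∈ bp ∪ bn, -s ∈ bp ∪ bn := by
    intro s hs
    rw [Finset.mem_union] at hs ⊢
    rcases hs with hs | hs
    · right
      rw [hbp, Finset.mem_image] at hs
      obtain ⟨i, hi, rfl⟩ := hs
      rw [hbn, Finset.mem_image]
      exact ⟨i, hi, rfl⟩
    · left
      rw [hbn, Finset.mem_image] at hs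
      obtain ⟨i, hi, rfl⟩ := hs
      rw [hbp, Finset.mem_image]
      exact ⟨i, hi, by simp⟩
  rcases Nat.even_or_odd d with hpar | hpar
  · -- d even
    have h2m : 2 * m = d := by
      obtain ⟨t, ht⟩ := hpar; omega
    obtain ⟨G, hG⟩ := circ_regular (bp ∪ bn) (by
        rw [Finset.mem_union]; rintro (h | h); exact h0bp h; exact h0bn h) hsymb
    rw [Finset.card_union_of_disjoint hdisj, hcardbp, hcardbn] at hG
    refine ⟨G, ?_⟩
    rw [show m + m = d by omega] at hG
    exact hG
  · -- d odd, so N even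
    have hNe : Even N := by
      rcases Nat.even_mul.mp he with h | h
      · exact absurd h (Nat.not_even_iff_odd.mpr hpar)
      · exact h
    obtain ⟨t, ht⟩ := hNe
    have htpos : 1 ≤ t := by omega
    have hmt : m < t := by
      obtain ⟨s, hs⟩ := hpar; omega
    set h : ZMod N := (t : ZMod N) with hh
    have hvalh : h.val = t := hvalcast t (by omega)
    have hneg : -h = h := by
      have : h + h = 0 := by
        rw [hh, ← Nat.cast_add, show t + t = N by omega, ZMod.natCast_self]
      exact neg_eq_of_add_eq_zero_left this
    have hhnotin : h ∉ bp ∪ bn := by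
      rw [Finset.mem_union]
      rintro (hx | hx)
      · rw [hbp, Finset.mem_image] at hx
        obtain ⟨i, hi, hi'⟩ := hx
        simp only [Finset.mem_Icc] at hi
        have := congrArg ZMod.val hi'
        rw [hvalcast i (by omega), hvalh] at this
        omega
      · rw [hbn, Finset.mem_image] at hx
        obtain ⟨i, hi, hi'⟩ := hx
        simp only [Finset.mem_Icc] at hi
        have : (i : ZMod N) = h := by rw [← hneg, ← hi']; ring
        have := congrArg ZMod.val this
        rw [hvalcast i (by omega), hvalh] at this
        omega
    obtain ⟨G, hG⟩ := circ_regular (insert h (bp ∪ bn)) (by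
        rw [Finset.mem_insert]
        rintro (h0 | h0)
        · rw [← h0] at hvalh
          rw [ZMod.val_zero] at hvalh
          omega
        · rw [Finset.mem_union] at h0; rcases h0 with h0 | h0
          exacts [h0bp h0, h0bn h0]) (by
        intro s hs
        rw [Finset.mem_insert] at hs ⊢
        rcases hs with rfl | hs
        · left; exact hneg
        · right; exact hsymb s hs)
    rw [Finset.card_insert_of_notMem hhnotin, Finset.card_union_of_disjoint hdisj,
      hcardbp, hcardbn] at hG
    refine ⟨G, ?_⟩
    obtain ⟨s, hs⟩ := hpar
    rw [show m + m + 1 = d by omega] at hG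
    exact hG

open Finset

variable {V : Type*} [Fintype V] [DecidableEq V]

-- number of darts continuing a dart without backtracking
lemma succ_dart_card (G : SimpleGraph V) [DecidableRel G.Adj] {d : ℕ}
    (hreg : G.IsRegularOfDegree d) (e : G.Dart) :
    (univ.filter fun e' : G.Dart => e'.fst = e.snd ∧ e'.snd ≠ e.fst).card ≤ d - 1 := by
  classical
  have hsub : (univ.filter fun e' : G.Dart => e'.fst = e.snd ∧ e'.snd ≠ e.fst)
      ⊆ (univ.filter fun e' : G.Dart => e'.fst = e.snd) \ {e.symm} := by
    intro e' he'
    simp only [mem_filter, mem_univ, true_and] at he'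
    rw [mem_sdiff, mem_filter]
    refine ⟨⟨mem_univ _, he'.1⟩, ?_⟩
    simp only [mem_singleton]
    intro h
    apply he'.2
    rw [h]
    rfl
  have := Finset.card_le_card hsub
  have hs : e.symm ∈ (univ.filter fun e' : G.Dart => e'.fst = e.snd) := by
    simp [SimpleGraph.Dart.symm, mem_filter]
  have hcard : ((univ.filter fun e' : G.Dart => e'.fst = e.snd) \ {e.symm}).card
      = d - 1 := by
    rw [Finset.card_sdiff_of_subset (by simpa using hs), Finset.card_singleton]
    rw [SimpleGraph.dart_fst_fiber_card_eq_degree, hreg e.snd]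
  omega

lemma start_dart_card (G : SimpleGraph V) [DecidableRel G.Adj] {d : ℕ}
    (hreg : G.IsRegularOfDegree d) (u : V) :
    (univ.filter fun e : G.Dart => e.fst = u).card = d := by
  rw [SimpleGraph.dart_fst_fiber_card_eq_degree, hreg u]

/-- the set of codes for non-backtracking dart sequences of length `m+1` starting at `u` -/
def Fj (G : SimpleGraph V) [DecidableRel G.Adj] (u : V) (m : ℕ) : Finset (Fin (m+1) → G.Dart) :=
  univ.filter fun f => (f 0).fst = u ∧
    ∀ i : Fin m, (f i.succ).fst = (f i.castSucc).snd ∧ (f i.succ).snd ≠ (f i.castSucc).fst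

lemma Fj_card (G : SimpleGraph V) [DecidableRel G.Adj] {d : ℕ}
    (hreg : G.IsRegularOfDegree d) (u : V) (m : ℕ) :
    (Fj G u m).card ≤ d * (d-1)^m := by
  classical
  induction m with
  | zero =>
    have : (Fj G u 0).card ≤ (univ.filter fun e : G.Dart => e.fst = u).card := by
      apply Finset.card_le_card_of_injOn (fun f => f 0)
      · intro f hf
        simp only [Fj, Finset.mem_coe, mem_filter, mem_univ, true_and] at hf
        simp [hf.1]
      · intro f1 _ f2 _ h
        funext i
        rw [Fin.eq_zero i]
        exact h
    rw [start_dart_card G hreg u] at this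
    simpa using this
  | succ m ih =>
    have key : (Fj G u (m+1)).card ≤ (d-1) * (Fj G u m).card := by
      apply Finset.card_le_mul_card_image_of_maps_to
        (f := fun f : Fin (m+2) → G.Dart => f ∘ Fin.castSucc)
      · intro f hf
        simp only [Fj, mem_filter, mem_univ, true_and] at hf ⊢
        refine ⟨?_, ?_⟩
        · have : Fin.castSucc (0 : Fin (m+1)) = 0 := rfl
          simpa [Function.comp, this] using hf.1
        · intro i
          have h := hf.2 i.castSucc
          simp only [Function.comp]
          rw [← Fin.succ_castSucc]
          exact h
      · intro g hg
        -- fiber over g injects into continuations of the last dart of g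
        refine le_trans ?_ (succ_dart_card G hreg (g (Fin.last m)))
        apply Finset.card_le_card_of_injOn (fun f => f (Fin.last (m+1)))
        · intro f hf
          simp only [Finset.mem_coe, mem_filter, mem_univ, true_and, Fj] at hf
          obtain ⟨⟨_, hcond⟩, hφ⟩ := hf
          have h := hcond (Fin.last m)
          have e1 : (Fin.last m).succ = Fin.last (m+1) := by
            ext; simp
          have e2 : f ((Fin.last m).castSucc) = g (Fin.last m) := by
            rw [← hφ]; rfl
          rw [e1, e2] at h
          simpa using h
        · intro f1 hf1 f2 hf2 h
          simp only [Finset.mem_coe, mem_filter] at hf1 hf2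
          funext i
          induction i using Fin.lastCases with
          | last => exact h
          | cast j =>
            calc f1 j.castSucc = g j := congrFun hf1.2 j
            _ = f2 j.castSucc := (congrFun hf2.2 j).symm
    calc (Fj G u (m+1)).card ≤ (d-1) * (Fj G u m).card := key
      _ ≤ (d-1) * (d * (d-1)^m) := Nat.mul_le_mul_left _ ih
      _ = d * (d-1)^(m+1) := by ring

lemma geom_sum_le_pow {r : ℕ} (hr : 2 ≤ r) (k : ℕ) : ∑ j ∈ Finset.range k, r^j ≤ r^k := by
  induction k with
  | zero => simp
  | succ k ih =>
    rw [Finset.sum_range_succ, pow_succ]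
    have : r^k * 2 ≤ r^k * r := Nat.mul_le_mul_left _ hr
    omega

open Classical in
lemma ball_card_le (G : SimpleGraph V) [DecidableRel G.Adj] {d : ℕ} (hd : 3 ≤ d)
    (hreg : G.IsRegularOfDegree d) (u : V) (k : ℕ) :
    (univ.filter fun v => ∃ p : G.Walk u v, p.IsPath ∧ p.length ≤ k).card
      ≤ 1 + d * (d-1)^k := by
  classical
  set T : Finset V := insert u ((Finset.range k).biUnion fun j =>
    (Fj G u j).image fun f => (f (Fin.last j)).snd) with hT
  have hsub : (univ.filter fun v => ∃ p : G.Walk u v, p.IsPath ∧ p.length ≤ k) ⊆ T := by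
    intro v hv
    simp only [mem_filter, mem_univ, true_and] at hv
    obtain ⟨p, hp, hl⟩ := hv
    rcases Nat.eq_zero_or_pos p.length with h0 | hpos
    · rw [hT, Finset.mem_insert]
      left
      exact (SimpleGraph.Walk.eq_of_length_eq_zero h0).symm
    · obtain ⟨j, hj⟩ : ∃ j, p.length = j + 1 := ⟨p.length - 1, by omega⟩
      have hdl : p.darts.length = j + 1 := by rw [SimpleGraph.Walk.length_darts, hj]
      have hsl : p.support.length = j + 2 := by rw [SimpleGraph.Walk.length_support, hj]
      -- encode the path as a dart sequence
      set f : Fin (j+1) → G.Dart := fun i => p.darts[(i : ℕ)]'(by omega) with hf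
      have hfst : ∀ (i : ℕ) (h1 : i < j + 1),
          (p.darts[i]'(by omega)).fst = p.support[i]'(by omega) := by
        intro i h1
        have hm := SimpleGraph.Walk.map_fst_darts p
        have h3 : i < (p.darts.map (fun e => e.fst)).length := by
          simpa using (by omega : i < p.darts.length)
        have := List.getElem_map (fun e : G.Dart => e.fst) (l := p.darts)
          (h := h3)
        rw [← this]
        have h4 : i < p.support.dropLast.length := by rw [← hm]; exact h3
        have := List.getElem_dropLast h4
        rw [← this]
        congr 1
      have hsnd : ∀ (i : ℕ) (h1 : i < j + 1),
          (p.darts[i]'(by omega)).snd = p.support[i+1]'(by omega) := by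
        intro i h1
        have hm := SimpleGraph.Walk.map_snd_darts p
        have h3 : i < (p.darts.map (fun e => e.snd)).length := by
          simpa using (by omega : i < p.darts.length)
        have := List.getElem_map (fun e : G.Dart => e.snd) (l := p.darts)
          (h := h3)
        rw [← this]
        have h4 : i < p.support.tail.length := by rw [← hm]; exact h3
        have := List.getElem_tail h4
        rw [← this]
        congr 1
      have hsupport0 : p.support[0]'(by omega) = u := by
        have h := List.getElem_of_eq (SimpleGraph.Walk.support_eq_cons p)
          (show 0 < p.support.length by omega)
        simpa using h
      have hsupportlast : p.support[j+1]'(by omega) = v := by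
        have h := SimpleGraph.Walk.getLast_support p
        rw [List.getLast_eq_getElem] at h
        refine Eq.trans ?_ h
        congr 1
        omega
      have hnodup : p.support.Nodup := hp.support_nodup
      have hfF : f ∈ Fj G u j := by
        simp only [Fj, mem_filter, mem_univ, true_and]
        refine ⟨?_, ?_⟩
        · simp only [hf, Fin.val_zero]
          rw [hfst 0 (by omega)]
          exact hsupport0
        · intro i
          constructor
          · simp only [hf, Fin.coe_castSucc, Fin.val_succ]
            rw [hfst ((i:ℕ)+1) (by omega), hsnd (i:ℕ) (by omega)]
          · simp only [hf, Fin.coe_castSucc, Fin.val_succ]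
            rw [hsnd ((i:ℕ)+1) (by omega), hfst (i:ℕ) (by omega)]
            intro hcontra
            rw [List.Nodup.getElem_inj_iff hnodup] at hcontra
            omega
      rw [hT, Finset.mem_insert]
      right
      rw [Finset.mem_biUnion]
      refine ⟨j, by rw [Finset.mem_range]; omega, ?_⟩
      rw [Finset.mem_image]
      refine ⟨f, hfF, ?_⟩
      simp only [hf, Fin.val_last]
      rw [hsnd j (by omega)]
      exact hsupportlast
  calc (univ.filter fun v => ∃ p : G.Walk u v, p.IsPath ∧ p.length ≤ k).card
      ≤ T.card := Finset.card_le_card hsub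
    _ ≤ 1 + ((Finset.range k).biUnion fun j =>
        (Fj G u j).image fun f => (f (Fin.last j)).snd).card := by
      rw [hT]
      exact (Finset.card_insert_le _ _).trans_eq (Nat.add_comm _ 1)
    _ ≤ 1 + ∑ j ∈ Finset.range k, ((Fj G u j).image fun f => (f (Fin.last j)).snd).card := by
      exact Nat.add_le_add_left Finset.card_biUnion_le 1
    _ ≤ 1 + ∑ j ∈ Finset.range k, d * (d-1)^j := by
      have : ∀ j ∈ Finset.range k,
          ((Fj G u j).image fun f => (f (Fin.last j)).snd).card ≤ d * (d-1)^j := by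
        intro j _
        exact le_trans (Finset.card_image_le) (Fj_card G hreg u j)
      exact Nat.add_le_add_left (Finset.sum_le_sum this) 1
    _ ≤ 1 + d * (d-1)^k := by
      rw [← Finset.mul_sum]
      exact Nat.add_le_add_left (Nat.mul_le_mul_left d
        (geom_sum_le_pow (by omega) k)) 1

open Classical in
noncomputable def probGUV (d n : ℕ)
    (E : SimpleGraph (Fin n) → Fin n → Fin n → Prop) : ℝ :=
  ((Finset.univ.filter (fun t : SimpleGraph (Fin n) × Fin n × Fin n =>
      t.1.IsRegularOfDegree d ∧ E t.1 t.2.1 t.2.2)).card : ℝ) /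
  (((Finset.univ.filter (fun G : SimpleGraph (Fin n) =>
      G.IsRegularOfDegree d)).card : ℝ) * n * n)

open Finset

open Classical in
lemma tripleCard (d n : ℕ) (E : SimpleGraph (Fin n) → Fin n → Fin n → Prop) :
    (Finset.univ.filter (fun t : SimpleGraph (Fin n) × Fin n × Fin n =>
      t.1.IsRegularOfDegree d ∧ E t.1 t.2.1 t.2.2)).card
    = ∑ G ∈ Finset.univ.filter (fun G : SimpleGraph (Fin n) => G.IsRegularOfDegree d),
        ∑ u : Fin n, (Finset.univ.filter (fun v => E G u v)).card := by
  rw [Finset.card_filter, Fintype.sum_prod_type, Finset.sum_filter]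
  refine Finset.sum_congr rfl fun G _ => ?_
  by_cases hG : G.IsRegularOfDegree d
  · simp only [hG, if_true, true_and, Fintype.sum_prod_type, Finset.card_filter]
  · simp [hG]

open Classical in
lemma tripleCard_true (d n : ℕ) :
    (Finset.univ.filter (fun t : SimpleGraph (Fin n) × Fin n × Fin n =>
      t.1.IsRegularOfDegree d)).card
    = (Finset.univ.filter (fun G : SimpleGraph (Fin n) =>
        G.IsRegularOfDegree d)).card * n * n := by
  have h := tripleCard d n (fun _ _ _ => True)
  simp only [and_true] at h
  rw [h]
  simp only [Finset.filter_true, Finset.card_univ, Fintype.card_fin, Finset.sum_const,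
    smul_eq_mul]
  ring

lemma probGUV_nonneg (d n : ℕ) (E : SimpleGraph (Fin n) → Fin n → Fin n → Prop) :
    0 ≤ probGUV d n E := by
  apply div_nonneg <;> positivity

open Classical in
lemma probGUV_le_of_card_le (d n B : ℕ) (E : SimpleGraph (Fin n) → Fin n → Fin n → Prop)
    (hB : ∀ G : SimpleGraph (Fin n), G.IsRegularOfDegree d → ∀ u : Fin n,
      (Finset.univ.filter (fun v => E G u v)).card ≤ B) :
    probGUV d n E ≤ (B : ℝ) / n := by
  set R := Finset.univ.filter (fun G : SimpleGraph (Fin n) => G.IsRegularOfDegree d) with hR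
  have hnum : (Finset.univ.filter (fun t : SimpleGraph (Fin n) × Fin n × Fin n =>
      t.1.IsRegularOfDegree d ∧ E t.1 t.2.1 t.2.2)).card ≤ R.card * n * B := by
    rw [tripleCard d n E]
    calc ∑ G ∈ R, ∑ u : Fin n, (Finset.univ.filter (fun v => E G u v)).card
        ≤ ∑ G ∈ R, ∑ _u : Fin n, B := by
          refine Finset.sum_le_sum fun G hG => Finset.sum_le_sum fun u _ => ?_
          exact hB G (by rw [hR] at hG; exact (Finset.mem_filter.mp hG).2) u
      _ = R.card * n * B := by
          simp [Finset.sum_const, Finset.card_univ, mul_assoc]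
  rw [probGUV]
  rcases Nat.eq_zero_or_pos n with hn | hn
  · subst hn
    simp
  rcases Nat.eq_zero_or_pos R.card with hRc | hRc
  · have : (Finset.univ.filter (fun t : SimpleGraph (Fin n) × Fin n × Fin n =>
        t.1.IsRegularOfDegree d ∧ E t.1 t.2.1 t.2.2)).card = 0 := by
      rw [hRc] at hnum
      simpa using hnum
    rw [show (Finset.univ.filter (fun G : SimpleGraph (Fin n) =>
      G.IsRegularOfDegree d)).card = R.card from rfl, this, hRc]
    simp
    positivity
  · have hD : (0:ℝ) < (R.card : ℝ) * n * n := by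
      have h1 : (0:ℝ) < (R.card : ℝ) := by exact_mod_cast hRc
      have h2 : (0:ℝ) < (n : ℝ) := by exact_mod_cast hn
      positivity
    rw [show (Finset.univ.filter (fun G : SimpleGraph (Fin n) =>
      G.IsRegularOfDegree d)).card = R.card from rfl]
    rw [div_le_div_iff₀ hD (by exact_mod_cast hn)]
    have : ((Finset.univ.filter (fun t : SimpleGraph (Fin n) × Fin n × Fin n =>
        t.1.IsRegularOfDegree d ∧ E t.1 t.2.1 t.2.2)).card : ℝ) ≤ (R.card : ℝ) * n * B := by
      exact_mod_cast hnum
    nlinarith [this, hD, (by exact_mod_cast hn : (0:ℝ) < (n:ℝ))]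

open Classical in
lemma probGUV_le_one (d n : ℕ) (E : SimpleGraph (Fin n) → Fin n → Fin n → Prop) :
    probGUV d n E ≤ 1 := by
  rw [probGUV]
  apply div_le_one_of_le₀
  · have hsub : (Finset.univ.filter (fun t : SimpleGraph (Fin n) × Fin n × Fin n =>
        t.1.IsRegularOfDegree d ∧ E t.1 t.2.1 t.2.2))
        ⊆ (Finset.univ.filter (fun t : SimpleGraph (Fin n) × Fin n × Fin n =>
        t.1.IsRegularOfDegree d)) := by
      intro t ht
      rw [Finset.mem_filter] at ht ⊢
      exact ⟨ht.1, ht.2.1⟩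
    have := Finset.card_le_card hsub
    rw [tripleCard_true d n] at this
    calc ((Finset.univ.filter (fun t : SimpleGraph (Fin n) × Fin n × Fin n =>
        t.1.IsRegularOfDegree d ∧ E t.1 t.2.1 t.2.2)).card : ℝ)
        ≤ ((Finset.univ.filter (fun G : SimpleGraph (Fin n) =>
          G.IsRegularOfDegree d)).card * n * n : ℕ) := by exact_mod_cast this
      _ = _ := by push_cast; ring
  · positivity

open Classical in
lemma probGUV_mono (d n : ℕ) (E E' : SimpleGraph (Fin n) → Fin n → Fin n → Prop)
    (h : ∀ G u v, E G u v → E' G u v) : probGUV d n E ≤ probGUV d n E' := by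
  rw [probGUV, probGUV]
  rcases eq_or_lt_of_le (show (0:ℝ) ≤ ((Finset.univ.filter (fun G : SimpleGraph (Fin n) =>
      G.IsRegularOfDegree d)).card : ℝ) * n * n by positivity) with hD | hD
  · rw [← hD, div_zero, div_zero]
  · rw [div_le_div_iff_of_pos_right hD]
    have hsub : (Finset.univ.filter (fun t : SimpleGraph (Fin n) × Fin n × Fin n =>
        t.1.IsRegularOfDegree d ∧ E t.1 t.2.1 t.2.2))
        ⊆ (Finset.univ.filter (fun t : SimpleGraph (Fin n) × Fin n × Fin n =>
        t.1.IsRegularOfDegree d ∧ E' t.1 t.2.1 t.2.2)) := by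
      intro t ht
      rw [Finset.mem_filter] at ht ⊢
      exact ⟨ht.1, ht.2.1, h _ _ _ ht.2.2⟩
    exact_mod_cast Finset.card_le_card hsub

open Classical in
lemma probGUV_compl (d n : ℕ) (E : SimpleGraph (Fin n) → Fin n → Fin n → Prop)
    (hR : 0 < (Finset.univ.filter (fun G : SimpleGraph (Fin n) =>
        G.IsRegularOfDegree d)).card) (hn : 0 < n) :
    probGUV d n E = 1 - probGUV d n (fun G u v => ¬ E G u v) := by
  rw [probGUV, probGUV]
  beta_reduce
  have hsplit : (Finset.univ.filter (fun t : SimpleGraph (Fin n) × Fin n × Fin n =>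
      t.1.IsRegularOfDegree d ∧ E t.1 t.2.1 t.2.2)).card
      + (Finset.univ.filter (fun t : SimpleGraph (Fin n) × Fin n × Fin n =>
      t.1.IsRegularOfDegree d ∧ ¬ E t.1 t.2.1 t.2.2)).card
      = (Finset.univ.filter (fun G : SimpleGraph (Fin n) =>
        G.IsRegularOfDegree d)).card * n * n := by
    rw [← tripleCard_true d n]
    rw [show (Finset.univ.filter (fun t : SimpleGraph (Fin n) × Fin n × Fin n =>
        t.1.IsRegularOfDegree d ∧ E t.1 t.2.1 t.2.2))
        = (Finset.univ.filter (fun t : SimpleGraph (Fin n) × Fin n × Fin n =>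
        t.1.IsRegularOfDegree d)).filter (fun t => E t.1 t.2.1 t.2.2) by
      rw [Finset.filter_filter]]
    rw [show (Finset.univ.filter (fun t : SimpleGraph (Fin n) × Fin n × Fin n =>
        t.1.IsRegularOfDegree d ∧ ¬ E t.1 t.2.1 t.2.2))
        = (Finset.univ.filter (fun t : SimpleGraph (Fin n) × Fin n × Fin n =>
        t.1.IsRegularOfDegree d)).filter (fun t => ¬ E t.1 t.2.1 t.2.2) by
      rw [Finset.filter_filter]]
    exact Finset.card_filter_add_card_filter_not _
  have hD : (0:ℝ) < ((Finset.univ.filter (fun G : SimpleGraph (Fin n) =>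
      G.IsRegularOfDegree d)).card : ℝ) * n * n := by
    have h1 : (0:ℝ) < ((Finset.univ.filter (fun G : SimpleGraph (Fin n) =>
      G.IsRegularOfDegree d)).card : ℝ) := by exact_mod_cast hR
    have h2 : (0:ℝ) < (n : ℝ) := by exact_mod_cast hn
    positivity
  have key : ((Finset.univ.filter (fun t : SimpleGraph (Fin n) × Fin n × Fin n =>
      t.1.IsRegularOfDegree d ∧ E t.1 t.2.1 t.2.2)).card : ℝ)
      + ((Finset.univ.filter (fun t : SimpleGraph (Fin n) × Fin n × Fin n =>
      t.1.IsRegularOfDegree d ∧ ¬ E t.1 t.2.1 t.2.2)).card : ℝ)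
      = ((Finset.univ.filter (fun G : SimpleGraph (Fin n) =>
        G.IsRegularOfDegree d)).card : ℝ) * n * n := by
    exact_mod_cast congrArg (fun x : ℕ => (x : ℝ)) hsplit
  have abstract : ∀ a b D : ℝ, a + b = D → 0 < D → a / D = 1 - b / D := by
    intro a b D hab hD
    field_simp
    linarith
  convert abstract _ _ _ key hD using 3
  congr!

/-- The filter of large `n` with `d * n` even. -/
def evenFilter (d : ℕ) : Filter ℕ :=
  Filter.atTop ⊓ Filter.principal {n : ℕ | Even (d * n)}

/-- The probability that there is a `u`–`v` path of length at most `log_{d-1} n - ω(n)` is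
`O((d-1)^{-ω(n)})`; in particular a.a.s. either `u` and `v` are not joined by a path, or
`d_G(u,v) ≥ log_{d-1} n - ω(n)`. -/
theorem distance_lower_bound_random_regular (d : ℕ) (hd : 3 ≤ d)
    (ω : ℕ → ℝ) (hω : Filter.Tendsto ω Filter.atTop Filter.atTop) :
    (∃ C : ℝ, ∀ᶠ n : ℕ in evenFilter d,
      probGUV d n (fun G u v =>
        ∃ p : G.Walk u v, p.IsPath ∧ (p.length : ℝ) ≤ Real.logb ((d : ℝ) - 1) n - ω n)
        ≤ C * ((d : ℝ) - 1) ^ (-(ω n))) ∧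
    Filter.Tendsto
      (fun n : ℕ => probGUV d n (fun G u v =>
        ¬ G.Reachable u v ∨ (G.dist u v : ℝ) ≥ Real.logb ((d : ℝ) - 1) n - ω n))
      (evenFilter d) (nhds 1) := by
  classical
  have hb1 : (1:ℝ) < (d:ℝ) - 1 := by
    have : (3:ℝ) ≤ (d:ℝ) := by exact_mod_cast hd
    linarith
  have hb0 : (0:ℝ) < (d:ℝ) - 1 := by linarith
  -- the key pointwise bound
  have claim : ∀ n : ℕ, d + 1 ≤ n →
      probGUV d n (fun G u v =>
        ∃ p : G.Walk u v, p.IsPath ∧ (p.length : ℝ) ≤ Real.logb ((d : ℝ) - 1) n - ω n)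
      ≤ ((d:ℝ) + 1) * ((d : ℝ) - 1) ^ (-(ω n)) := by
    intro n hn
    set L : ℝ := Real.logb ((d : ℝ) - 1) n - ω n with hL
    have hrpow_pos : (0:ℝ) < ((d : ℝ) - 1) ^ (-(ω n)) := Real.rpow_pos_of_pos hb0 _
    by_cases hL0 : 0 ≤ L
    · set k : ℕ := ⌊L⌋₊ with hk
      have hB : ∀ G : SimpleGraph (Fin n), G.IsRegularOfDegree d → ∀ u : Fin n,
          (Finset.univ.filter (fun v => ∃ p : G.Walk u v, p.IsPath ∧
            (p.length : ℝ) ≤ L)).card ≤ 1 + d * (d-1)^k := by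
        intro G hreg u
        refine le_trans (Finset.card_le_card ?_) (ball_card_le G hd hreg u k)
        intro v hv
        rw [Finset.mem_filter] at hv ⊢
        obtain ⟨_, p, hp, hlen⟩ := hv
        exact ⟨Finset.mem_univ _, p, hp, Nat.le_floor hlen⟩
      have h1 := probGUV_le_of_card_le d n (1 + d * (d-1)^k) _ hB
      refine h1.trans ?_
      -- real arithmetic
      have hnR : (0:ℝ) < (n:ℝ) := by
        have : 0 < n := by omega
        exact_mod_cast this
      have hcast : ((1 + d * (d-1)^k : ℕ) : ℝ) = 1 + (d:ℝ) * ((d:ℝ)-1)^k := by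
        push_cast [Nat.cast_sub (by omega : 1 ≤ d)]
        ring
      have h1k : (1:ℝ) ≤ ((d:ℝ)-1)^k := one_le_pow₀ (by linarith)
      have hnum : ((1 + d * (d-1)^k : ℕ) : ℝ) ≤ ((d:ℝ)+1) * ((d:ℝ)-1)^k := by
        rw [hcast]
        nlinarith
      have hpowle : ((d:ℝ)-1)^k ≤ (n:ℝ) * ((d : ℝ) - 1) ^ (-(ω n)) := by
        have e1 : ((d:ℝ)-1)^k = ((d:ℝ)-1) ^ ((k:ℝ) : ℝ) := (Real.rpow_natCast _ k).symm
        have e2 : ((d:ℝ)-1) ^ ((k:ℝ) : ℝ) ≤ ((d:ℝ)-1) ^ L :=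
          Real.rpow_le_rpow_of_exponent_le hb1.le (Nat.floor_le hL0)
        have e3 : ((d:ℝ)-1) ^ L = (n:ℝ) * ((d : ℝ) - 1) ^ (-(ω n)) := by
          rw [hL, Real.rpow_sub hb0, Real.rpow_logb hb0 (by linarith) hnR,
            Real.rpow_neg hb0.le, div_eq_mul_inv]
        rw [e1, ← e3]
        exact e2
      calc ((1 + d * (d-1)^k : ℕ) : ℝ) / n
          ≤ (((d:ℝ)+1) * ((n:ℝ) * ((d : ℝ) - 1) ^ (-(ω n)))) / n := by
            rw [div_le_div_iff_of_pos_right hnR]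
            refine hnum.trans ?_
            have : (0:ℝ) ≤ (d:ℝ) + 1 := by positivity
            exact mul_le_mul_of_nonneg_left hpowle this
      _ = ((d:ℝ) + 1) * ((d : ℝ) - 1) ^ (-(ω n)) := by
            field_simp
    · -- the event is empty
      have hB : ∀ G : SimpleGraph (Fin n), G.IsRegularOfDegree d → ∀ u : Fin n,
          (Finset.univ.filter (fun v => ∃ p : G.Walk u v, p.IsPath ∧
            (p.length : ℝ) ≤ L)).card ≤ 0 := by
        intro G hreg u
        have : (Finset.univ.filter (fun v => ∃ p : G.Walk u v, p.IsPath ∧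
            (p.length : ℝ) ≤ L)) = ∅ := by
          rw [Finset.eq_empty_iff_forall_notMem]
          intro v hv
          rw [Finset.mem_filter] at hv
          obtain ⟨_, p, hp, hlen⟩ := hv
          have : (0:ℝ) ≤ (p.length : ℝ) := by positivity
          linarith [not_le.mp hL0]
        rw [this]
        simp
      have h1 := probGUV_le_of_card_le d n 0 _ hB
      simp only [Nat.cast_zero, zero_div] at h1
      refine h1.trans ?_
      positivity
  constructor
  · refine ⟨(d:ℝ) + 1, ?_⟩
    rw [evenFilter, Filter.eventually_inf_principal]
    filter_upwards [Filter.eventually_ge_atTop (d+1)] with n hn _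
    exact claim n hn
  · -- the a.a.s. statement
    have hωev : Filter.Tendsto ω (evenFilter d) Filter.atTop :=
      hω.mono_left inf_le_left
    have hx : Filter.Tendsto (fun n : ℕ => ((d : ℝ) - 1) ^ (-(ω n)))
        (evenFilter d) (nhds 0) := by
      have := ((tendsto_rpow_atTop_of_base_gt_one ((d:ℝ)-1) hb1).comp hωev).inv_tendsto_atTop
      refine this.congr fun n => ?_
      simp [Function.comp, Real.rpow_neg hb0.le]
    have hg : Filter.Tendsto (fun n : ℕ => 1 - ((d:ℝ)+1) * ((d : ℝ) - 1) ^ (-(ω n)))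
        (evenFilter d) (nhds 1) := by
      have : Filter.Tendsto (fun n : ℕ => ((d:ℝ)+1) * ((d : ℝ) - 1) ^ (-(ω n)))
          (evenFilter d) (nhds 0) := by
        simpa using hx.const_mul ((d:ℝ)+1)
      simpa using tendsto_const_nhds.sub this
    have hbounds : ∀ᶠ n : ℕ in evenFilter d,
        1 - ((d:ℝ)+1) * ((d : ℝ) - 1) ^ (-(ω n)) ≤
          probGUV d n (fun G u v =>
            ¬ G.Reachable u v ∨ (G.dist u v : ℝ) ≥ Real.logb ((d : ℝ) - 1) n - ω n) ∧
        probGUV d n (fun G u v =>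
            ¬ G.Reachable u v ∨ (G.dist u v : ℝ) ≥ Real.logb ((d : ℝ) - 1) n - ω n) ≤ 1 := by
      rw [evenFilter, Filter.eventually_inf_principal]
      filter_upwards [Filter.eventually_ge_atTop (d+1)] with n hn heven
      refine ⟨?_, probGUV_le_one d n _⟩
      -- there exists a regular graph, so the total count is positive
      obtain ⟨G0, hG0⟩ := exists_regular_graph d n (by omega) hn heven
      have hR : 0 < (Finset.univ.filter (fun G : SimpleGraph (Fin n) =>
          G.IsRegularOfDegree d)).card := by
        apply Finset.card_pos.mpr
        exact ⟨G0, Finset.mem_filter.mpr ⟨Finset.mem_univ _, hG0⟩⟩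
      have hcompl := probGUV_compl d n (fun G u v =>
          ¬ G.Reachable u v ∨ (G.dist u v : ℝ) ≥ Real.logb ((d : ℝ) - 1) n - ω n)
        hR (by omega)
      rw [hcompl]
      have hmono := probGUV_mono d n
        (fun (G : SimpleGraph (Fin n)) u v => ¬ (¬ G.Reachable u v ∨
          (G.dist u v : ℝ) ≥ Real.logb ((d : ℝ) - 1) n - ω n))
        (fun (G : SimpleGraph (Fin n)) u v =>
          ∃ p : G.Walk u v, p.IsPath ∧ (p.length : ℝ) ≤ Real.logb ((d : ℝ) - 1) n - ω n)
        ?_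
      · have := hmono.trans (claim n hn)
        linarith
      · intro G u v hc
        push_neg at hc
        obtain ⟨hreach, hdist⟩ := hc
        obtain ⟨p, hp, hplen⟩ := hreach.exists_path_of_dist
        exact ⟨p, hp, by rw [hplen]; exact hdist.le⟩
    apply tendsto_of_tendsto_of_tendsto_of_le_of_le' hg tendsto_const_nhds
    · exact hbounds.mono fun n h => h.1
    · exact hbounds.mono fun n h => h.2
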